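/- Any probability density ρ on ℝ satisfying the fixed-point integral equations ρ(d) = e^{d}∫_{−∞}^{d} ρ(δ)dδ + e^{2d}∫_{d}^{∞} ρ(δ)e^{−δ}dδ for d < 0, and ρ(d) = e^{−2d}∫_{−∞}^{d} ρ(δ)e^{δ}dδ + e^{−d}∫_{d}^{∞} ρ(δ)dδ for d ≥ 0, which is twice continuously differentiable on (−∞,0), satisfies the ODE ρ''(d) = 3ρ'(d) − (2 + e^{d})ρ(d) for all d < 0. -/

import Mathlib

open Real MeasureTheory Set

lemma hasDerivAt_integral_Iio (f : ℝ → ℝ) (hf : Integrable f) (hc : Continuous f) (x : ℝ) :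
    HasDerivAt (fun y => ∫ t in Iio y, f t) (f x) x := by
  have key : ∀ y : ℝ, ∫ t in Iio y, f t = (∫ t in Iic (0:ℝ), f t) + ∫ t in (0:ℝ)..y, f t := by
    intro y
    rw [← integral_Iic_eq_integral_Iio]
    have := intervalIntegral.integral_Iic_sub_Iic (μ := volume) (f := f) (a := 0) (b := y)
      hf.integrableOn hf.integrableOn
    linarith
  have h1 : HasDerivAt (fun y => (∫ t in Iic (0:ℝ), f t) + ∫ t in (0:ℝ)..y, f t) (f x) x := by
    refine (HasDerivAt.const_add _ ?_)
    exact intervalIntegral.integral_hasDerivAt_right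
      hf.intervalIntegrable
      hc.aestronglyMeasurable.stronglyMeasurableAtFilter hc.continuousAt
  exact h1.congr_of_eventuallyEq (Filter.Eventually.of_forall key)

lemma hasDerivAt_integral_Ioi (f : ℝ → ℝ) (hf : Integrable f) (hc : Continuous f) (x : ℝ) :
    HasDerivAt (fun y => ∫ t in Ioi y, f t) (-(f x)) x := by
  have key : ∀ y : ℝ, ∫ t in Ioi y, f t = (∫ t, f t) - ∫ t in Iio y, f t := by
    intro y
    rw [← integral_Iic_eq_integral_Iio,
      ← intervalIntegral.integral_Iic_add_Ioi hf.integrableOn hf.integrableOn]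
    ring
  have h1 : HasDerivAt (fun y => (∫ t, f t) - ∫ t in Iio y, f t) (-(f x)) x :=
    (hasDerivAt_integral_Iio f hf hc x).const_sub _
  exact h1.congr_of_eventuallyEq (Filter.Eventually.of_forall key)

/-- A probability density solving the stationary integral equations, and twice continuously
differentiable on `(−∞,0)`, satisfies `ρ'' = 3ρ' − (2+e^d)ρ` there. -/
theorem stationary_density_ode (ρ ρ' ρ'' : ℝ → ℝ)
    (hnonneg : ∀ d, 0 ≤ ρ d) (hint : Integrable ρ) (hcont : Continuous ρ)
    (hone : ∫ d, ρ d = 1)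
    (hint₁ : Integrable fun δ => ρ δ * exp (-δ))
    (hint₂ : Integrable fun δ => ρ δ * exp δ)
    (heq_neg : ∀ d < 0, ρ d =
      exp d * (∫ δ in Iio d, ρ δ) + exp (2 * d) * ∫ δ in Ioi d, ρ δ * exp (-δ))
    (heq_pos : ∀ d, 0 ≤ d → ρ d =
      exp (-(2 * d)) * (∫ δ in Iio d, ρ δ * exp δ) + exp (-d) * ∫ δ in Ioi d, ρ δ)
    (hder : ∀ d < 0, HasDerivAt ρ (ρ' d) d)
    (hder' : ∀ d < 0, HasDerivAt ρ' (ρ'' d) d)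
    (hcont'' : ContinuousOn ρ'' (Iio 0)) :
    ∀ d < 0, ρ'' d = 3 * ρ' d - (2 + exp d) * ρ d := by
  set F : ℝ → ℝ := fun y => ∫ δ in Iio y, ρ δ with hF
  set G : ℝ → ℝ := fun y => ∫ δ in Ioi y, ρ δ * exp (-δ) with hG
  have hcont₁ : Continuous fun δ => ρ δ * exp (-δ) := by continuity
  have hFd : ∀ x : ℝ, HasDerivAt F (ρ x) x := fun x =>
    hasDerivAt_integral_Iio ρ hint hcont x
  have hGd : ∀ x : ℝ, HasDerivAt G (-(ρ x * exp (-x))) x := fun x =>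
    hasDerivAt_integral_Ioi _ hint₁ hcont₁ x
  -- g is the RHS function, ρ = g on Iio 0
  set g : ℝ → ℝ := fun y => exp y * F y + exp (2 * y) * G y with hg
  have hgd : ∀ x : ℝ, HasDerivAt g (exp x * F x + 2 * exp (2 * x) * G x) x := by
    intro x
    have h1 : HasDerivAt (fun y => exp y * F y) (exp x * F x + exp x * ρ x) x :=
      (Real.hasDerivAt_exp x).mul (hFd x)
    have h2 : HasDerivAt (fun y => exp (2 * y)) (exp (2 * x) * 2) x :=
      HasDerivAt.exp (by simpa using (hasDerivAt_id x).const_mul 2)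
    have h3 : HasDerivAt (fun y => exp (2 * y) * G y)
        (exp (2 * x) * 2 * G x + exp (2 * x) * -(ρ x * exp (-x))) x := h2.mul (hGd x)
    have h4 := h1.add h3
    have hexp : exp (2 * x) * exp (-x) = exp x := by
      rw [← Real.exp_add]; ring_nf
    exact h4.congr_deriv (by linear_combination (-ρ x) * hexp)
  -- first derivative identity on Iio 0
  have hρ'eq : ∀ x < 0, ρ' x = exp x * F x + 2 * exp (2 * x) * G x := by
    intro x hx
    have hmem : Iio (0:ℝ) ∈ nhds x := Iio_mem_nhds hx
    have hgρ : g =ᶠ[nhds x] ρ := by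
      filter_upwards [hmem] with y hy
      exact (heq_neg y hy).symm
    have := (hgd x).congr_of_eventuallyEq hgρ.symm
    exact (hder x hx).unique this
  -- second derivative
  intro d hd
  have hmem : Iio (0:ℝ) ∈ nhds d := Iio_mem_nhds hd
  have hg'd : HasDerivAt (fun y => exp y * F y + 2 * (exp (2 * y) * G y))
      (exp d * F d + exp d * ρ d + 4 * exp (2 * d) * G d - 2 * exp d * ρ d) d := by
    have h1 : HasDerivAt (fun y => exp y * F y) (exp d * F d + exp d * ρ d) d :=
      (Real.hasDerivAt_exp d).mul (hFd d)
    have h2 : HasDerivAt (fun y => exp (2 * y)) (exp (2 * d) * 2) d :=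
      HasDerivAt.exp (by simpa using (hasDerivAt_id d).const_mul 2)
    have h3 : HasDerivAt (fun y => exp (2 * y) * G y)
        (exp (2 * d) * 2 * G d + exp (2 * d) * -(ρ d * exp (-d))) d := h2.mul (hGd d)
    have h4 := h1.add (h3.const_mul 2)
    have hexp : exp (2 * d) * exp (-d) = exp d := by
      rw [← Real.exp_add]; ring_nf
    exact h4.congr_deriv (by linear_combination (-(2 * ρ d)) * hexp)
  have hρ'' : HasDerivAt ρ'
      (exp d * F d + exp d * ρ d + 4 * exp (2 * d) * G d - 2 * exp d * ρ d) d := by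
    refine hg'd.congr_of_eventuallyEq ?_
    filter_upwards [hmem] with y hy
    rw [hρ'eq y hy]; ring
  have heq := (hder' d hd).unique hρ''
  rw [heq, hρ'eq d hd, heq_neg d hd]
  ring
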